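/- arXiv:2007.07850 — 2 statements merged into one kernel-verified Lean document; each statement's English description precedes it below -/
import Mathlib

section
/- If p : [0,t] → [0,1] is measurable with ∫₀ᵗ x·p(x) dx ≤ t, then ∫₀ᵗ p(x) dx ≤ √(2t). -/
open MeasureTheory

/-- If `p : [0,t] → [0,1]` is measurable with `∫₀ᵗ x·p(x) dx ≤ t`, then
`∫₀ᵗ p(x) dx ≤ √(2t)`. -/
theorem integral_le_sqrt_two_mul_of_first_moment_le
    (t : ℝ) (ht : 0 < t) (p : ℝ → ℝ) (hmeas : Measurable p)
    (hp : ∀ x ∈ Set.Icc 0 t, p x ∈ Set.Icc (0 : ℝ) 1)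
    (hmoment : ∫ x in (0 : ℝ)..t, x * p x ≤ t) :
    ∫ x in (0 : ℝ)..t, p x ≤ Real.sqrt (2 * t) := by
  -- integrability of p on [0,t]
  have hpi : IntervalIntegrable p volume 0 t := by
    rw [intervalIntegrable_iff_integrableOn_Ioc_of_le ht.le]
    apply Measure.integrableOn_of_bounded (M := 1)
      (by simp [Real.volume_Ioc]) hmeas.aestronglyMeasurable
    filter_upwards [ae_restrict_mem measurableSet_Ioc] with x hx
    have h := hp x ⟨hx.1.le, hx.2⟩
    rw [Real.norm_eq_abs, abs_le]
    exact ⟨by linarith [h.1], h.2⟩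
  -- integrability of x * p x on [0,t]
  have hxpi : IntervalIntegrable (fun x => x * p x) volume 0 t := by
    rw [intervalIntegrable_iff_integrableOn_Ioc_of_le ht.le]
    apply Measure.integrableOn_of_bounded (M := t)
      (by simp [Real.volume_Ioc]) (measurable_id.mul hmeas).aestronglyMeasurable
    filter_upwards [ae_restrict_mem measurableSet_Ioc] with x hx
    have h := hp x ⟨hx.1.le, hx.2⟩
    rw [Real.norm_eq_abs, abs_le]
    simp only [Pi.mul_apply, id]
    constructor
    · nlinarith [hx.1, hx.2, h.1, h.2]
    · nlinarith [hx.1, hx.2, h.1, h.2]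
  set I := ∫ x in (0 : ℝ)..t, p x with hIdef
  have hI0 : 0 ≤ I := by
    apply intervalIntegral.integral_nonneg ht.le
    intro x hx
    exact (hp x hx).1
  have hIt : I ≤ t := by
    have : I ≤ ∫ _ in (0 : ℝ)..t, (1 : ℝ) := by
      apply intervalIntegral.integral_mono_on ht.le hpi intervalIntegrable_const
      intro x hx
      exact (hp x hx).2
    simpa using this
  have h01 : Set.uIcc (0 : ℝ) I ⊆ Set.uIcc (0 : ℝ) t :=
    Set.uIcc_subset_uIcc (by simp) (by rw [Set.uIcc_of_le ht.le]; exact ⟨hI0, hIt⟩)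
  have hIt' : Set.uIcc I t ⊆ Set.uIcc (0 : ℝ) t :=
    Set.uIcc_subset_uIcc (by rw [Set.uIcc_of_le ht.le]; exact ⟨hI0, hIt⟩)
      (by rw [Set.uIcc_of_le ht.le]; exact ⟨ht.le, le_refl t⟩)
  -- integrability on subintervals
  have hp1 := hpi.mono_set h01
  have hp2 := hpi.mono_set hIt'
  have hxp1 := hxpi.mono_set h01
  have hxp2 := hxpi.mono_set hIt'
  -- additivity
  have hKadd : (∫ x in (0 : ℝ)..I, p x) + (∫ x in I..t, p x) = I :=
    intervalIntegral.integral_add_adjacent_intervals hp1 hp2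
  have hJadd : (∫ x in (0 : ℝ)..I, x * p x) + (∫ x in I..t, x * p x)
      = ∫ x in (0 : ℝ)..t, x * p x :=
    intervalIntegral.integral_add_adjacent_intervals hxp1 hxp2
  -- A := ∫₀^I (x - I)(p x - 1) ≥ 0
  have hA : 0 ≤ ∫ x in (0 : ℝ)..I, (x - I) * (p x - 1) := by
    apply intervalIntegral.integral_nonneg hI0
    intro x hx
    have h := hp x ⟨hx.1, le_trans hx.2 hIt⟩
    nlinarith [hx.2, h.2]
  -- B := ∫_I^t (x - I) p x ≥ 0
  have hB : 0 ≤ ∫ x in I..t, (x - I) * p x := by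
    apply intervalIntegral.integral_nonneg hIt
    intro x hx
    have h := hp x ⟨le_trans hI0 hx.1, hx.2⟩
    exact mul_nonneg (by linarith [hx.1]) h.1
  -- expand A
  have hsub1 : IntervalIntegrable (fun x => x * p x - I * p x) volume 0 I :=
    hxp1.sub (hp1.const_mul I)
  have hA' : (∫ x in (0 : ℝ)..I, (x - I) * (p x - 1))
      = (∫ x in (0 : ℝ)..I, x * p x) - I * (∫ x in (0 : ℝ)..I, p x)
        - ((∫ x in (0 : ℝ)..I, x) - I * I) := by
    have e : (fun x => (x - I) * (p x - 1))
        = fun x => (x * p x - I * p x) - (x - I) := by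
      ext x; ring
    rw [e, intervalIntegral.integral_sub hsub1
        ((intervalIntegral.intervalIntegrable_id).sub intervalIntegrable_const),
      intervalIntegral.integral_sub hxp1 (hp1.const_mul I),
      intervalIntegral.integral_sub intervalIntegral.intervalIntegrable_id
        intervalIntegrable_const,
      intervalIntegral.integral_const_mul]
    simp [mul_comm]
  have hidI : (∫ x in (0 : ℝ)..I, x) = I ^ 2 / 2 := by
    simp [integral_id]
  -- expand B
  have hB' : (∫ x in I..t, (x - I) * p x)
      = (∫ x in I..t, x * p x) - I * (∫ x in I..t, p x) := by
    have e : (fun x => (x - I) * p x) = fun x => x * p x - I * p x := by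
      ext x; ring
    rw [e, intervalIntegral.integral_sub hxp2 (hp2.const_mul I),
      intervalIntegral.integral_const_mul]
  -- combine: I²/2 ≤ ∫₀ᵗ x p x ≤ t
  have hkey : I ^ 2 ≤ 2 * t := by
    rw [hA', hidI] at hA
    rw [hB'] at hB
    nlinarith [hA, hB, hKadd, hJadd, hmoment]
  have h1 := Real.sq_sqrt (show (0 : ℝ) ≤ 2 * t by linarith)
  have h2 := Real.sqrt_nonneg (2 * t)
  nlinarith [hkey, h1, h2]
end

section
/- Let M(t) be the pure-birth Markov process started at M(0)=0 which jumps from state n to n+1 at rate 1/(n+1), i.e., M(t) = max{n : ζₙ ≤ t} with ζₙ = ∑_{j=1}^n j·η_j, η_j i.i.d. standard exponential. Then E[M(t)²] = 2t − E[M(t)] for all t ≥ 0. -/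
open MeasureTheory ProbabilityTheory
open Set Real Filter
open scoped ENNReal NNReal Topology

/-- The pure-birth (entrance count) process: `M(t) = max{n : ζₙ ≤ t}` where
`ζₙ = ∑_{j=1}^n j·η_j`. -/
noncomputable def entranceCount {Ω : Type*} (η : ℕ → Ω → ℝ) (t : ℝ) (ω : Ω) : ℕ :=
  sSup {n : ℕ | ∑ j ∈ Finset.Icc 1 n, (j : ℝ) * η j ω ≤ t}

namespace EntranceAux

lemma expMeasure_apply {s : Set ℝ} (hs : MeasurableSet s) :
    expMeasure 1 s = ∫⁻ x in s, exponentialPDF 1 x := by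
  rw [expMeasure, gammaMeasure, withDensity_apply _ hs]; rfl

lemma expMeasure_Iic (x : ℝ) :
    expMeasure 1 (Iic x) = ENNReal.ofReal (if 0 ≤ x then 1 - rexp (-x) else 0) := by
  rw [expMeasure_apply measurableSet_Iic, lintegral_exponentialPDF_eq_antiDeriv one_pos]
  simp

lemma expMeasure_Iio_zero : expMeasure 1 (Iio 0) = 0 := by
  rw [expMeasure_apply measurableSet_Iio]
  exact lintegral_exponentialPDF_of_nonpos le_rfl

lemma expMeasure_singleton (x : ℝ) : expMeasure 1 {x} = 0 := by
  rw [expMeasure_apply (measurableSet_singleton x)]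
  exact setLIntegral_measure_zero _ _ (measure_singleton x)

instance : IsProbabilityMeasure (expMeasure 1) := isProbabilityMeasure_expMeasure one_pos

lemma expMeasure_Iio (x : ℝ) : expMeasure 1 (Iio x) = expMeasure 1 (Iic x) := by
  have h : Iic x = Iio x ∪ {x} := by
    ext y; simp [le_iff_lt_or_eq]
  refine le_antisymm (measure_mono Iio_subset_Iic_self) ?_
  rw [h]
  exact le_trans (measure_union_le _ _) (by rw [expMeasure_singleton, add_zero])

lemma expMeasure_Ici {x : ℝ} (hx : 0 ≤ x) :
    expMeasure 1 (Ici x) = ENNReal.ofReal (rexp (-x)) := by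
  have h1 : expMeasure 1 (Iio x) = ENNReal.ofReal (1 - rexp (-x)) := by
    rw [expMeasure_Iio, expMeasure_Iic, if_pos hx]
  have hcompl : Ici x = (Iio x)ᶜ := by simp
  rw [hcompl, prob_compl_eq_one_sub measurableSet_Iio, h1]
  have hle : rexp (-x) ≤ 1 := exp_le_one_iff.2 (by linarith)
  have : ENNReal.ofReal (1 - rexp (-x)) + ENNReal.ofReal (rexp (-x)) = 1 := by
    rw [← ENNReal.ofReal_add (by linarith) (exp_pos _).le]
    simp
  exact (ENNReal.eq_sub_of_add_eq (by simp) (by rw [add_comm] at this; simpa using this)).symm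

/-- The calculus fact: `∫ s in Ioc 0 a, exp (-s/c) ds = c * (1 - exp (-a/c))`. -/
lemma lintegral_exp_Ioc {c a : ℝ} (hc : 0 < c) (ha : 0 < a) :
    ∫⁻ s in Ioc 0 a, ENNReal.ofReal (rexp (-(s/c))) ∂volume
      = ENNReal.ofReal (c * (1 - rexp (-(a/c)))) := by
  have hcont : Continuous fun s : ℝ => rexp (-(s/c)) := by
    continuity
  have hint : IntegrableOn (fun s : ℝ => rexp (-(s/c))) (Ioc 0 a) := by
    exact hcont.integrableOn_Ioc
  rw [← ofReal_integral_eq_lintegral_ofReal hint (ae_of_all _ fun s => (exp_pos _).le)]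
  congr 1
  have h1 : ∫ s in Ioc 0 a, rexp (-(s/c)) = ∫ s in (0)..a, rexp (-(s/c)) := by
    rw [intervalIntegral.integral_of_le ha.le]
  rw [h1]
  have hderiv : ∀ s ∈ uIcc (0:ℝ) a, HasDerivAt (fun u : ℝ => -c * rexp (-(u/c)))
      (rexp (-(s/c))) s := by
    intro s _
    have h := ((hasDerivAt_id s).div_const c).neg.exp.const_mul (-c)
    refine h.congr_deriv ?_
    simp only [Pi.neg_apply, id]
    field_simp
  rw [intervalIntegral.integral_eq_sub_of_hasDerivAt hderiv
    (hcont.intervalIntegrable 0 a)]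
  simp only [zero_div, neg_zero, exp_zero, mul_one]
  ring

lemma vol_Ioc_inter_Iic (a b : ℝ) :
    volume (Ioc 0 a ∩ Iic b) = ENNReal.ofReal (min a b) := by
  rw [Set.Ioc_inter_Iic, Real.volume_Ioc, sub_zero]

/-- Key per-point computation: `∫ min(a, c·y) dExp(y) = c · P(c·Y ≤ a)`. -/
lemma lintegral_min_exp {c : ℝ} (hc : 0 < c) (a : ℝ) :
    ∫⁻ y, ENNReal.ofReal (min a (c * y)) ∂(expMeasure 1)
      = ENNReal.ofReal c * expMeasure 1 {y | c * y ≤ a} := by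
  have hset : {y : ℝ | c * y ≤ a} = Iic (a / c) := by
    ext y; simp [le_div_iff₀ hc, mul_comm]
  -- layer cake + swap
  have hlayer : ∀ y : ℝ, ENNReal.ofReal (min a (c * y))
      = ∫⁻ s in Ioc 0 a, ({p : ℝ × ℝ | p.2 ≤ c * p.1}.indicator (fun _ => 1) (y, s)) ∂volume := by
    intro y
    have : ∀ s : ℝ, ({p : ℝ × ℝ | p.2 ≤ c * p.1}.indicator (fun _ => (1:ℝ≥0∞)) (y, s))
        = (Iic (c * y)).indicator (fun _ => 1) s := by
      intro s; simp [Set.indicator_apply, Set.mem_setOf_eq, Set.mem_Iic]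
    simp_rw [this]
    rw [lintegral_indicator measurableSet_Iic, setLIntegral_one,
      Measure.restrict_apply measurableSet_Iic, Set.inter_comm, vol_Ioc_inter_Iic]
  simp_rw [hlayer]
  have hmeasset : MeasurableSet {p : ℝ × ℝ | p.2 ≤ c * p.1} :=
    measurableSet_le measurable_snd (measurable_fst.const_mul c)
  have hswap := lintegral_lintegral_swap (μ := expMeasure 1)
    (ν := volume.restrict (Ioc 0 a))
    (f := fun y s => ({p : ℝ × ℝ | p.2 ≤ c * p.1}.indicator (fun _ => (1:ℝ≥0∞)) (y, s)))
    (((measurable_one.indicator hmeasset)).aemeasurable)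
  rw [hswap]
  rcases le_or_gt a 0 with ha | ha
  · rw [Set.Ioc_eq_empty (by simpa using ha), Measure.restrict_empty, lintegral_zero_measure]
    rw [hset, expMeasure_Iic]
    rcases lt_or_eq_of_le (div_nonpos_of_nonpos_of_nonneg ha hc.le) with h | h
    · rw [if_neg (not_le.2 h), ENNReal.ofReal_zero, mul_zero]
    · rw [h, if_pos le_rfl]; simp
  · have hinner : ∀ s ∈ Ioc (0:ℝ) a,
        (∫⁻ y, ({p : ℝ × ℝ | p.2 ≤ c * p.1}.indicator (fun _ => (1:ℝ≥0∞)) (y, s)) ∂(expMeasure 1))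
          = ENNReal.ofReal (rexp (-(s/c))) := by
      intro s hs
      have h1 : ∀ y : ℝ, ({p : ℝ × ℝ | p.2 ≤ c * p.1}.indicator (fun _ => (1:ℝ≥0∞)) (y, s))
          = (Ici (s / c)).indicator (fun _ => 1) y := by
        intro y
        simp [Set.indicator_apply, Set.mem_setOf_eq, Set.mem_Ici, div_le_iff₀ hc, mul_comm]
      simp_rw [h1]
      rw [lintegral_indicator measurableSet_Ici, setLIntegral_one]
      exact expMeasure_Ici (div_nonneg hs.1.le hc.le)
    rw [setLIntegral_congr_fun measurableSet_Ioc hinner,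
      lintegral_exp_Ioc hc ha, hset, expMeasure_Iic, if_pos (div_nonneg ha.le hc.le),
      ENNReal.ofReal_mul hc.le]

section main

variable {Ω : Type*} [MeasurableSpace Ω] {μ : Measure Ω} [IsProbabilityMeasure μ]
  {η : ℕ → Ω → ℝ}

/-- `ζₙ`. -/
noncomputable def Z (η : ℕ → Ω → ℝ) (n : ℕ) (ω : Ω) : ℝ :=
  ∑ j ∈ Finset.Icc 1 n, (j : ℝ) * η j ω

lemma measurable_Z (hmeas : ∀ j, Measurable (η j)) (n : ℕ) : Measurable (Z η n) :=
  Finset.measurable_sum _ fun j _ => (hmeas j).const_mul _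

lemma Z_zero (ω : Ω) : Z η 0 ω = 0 := by simp [Z]

lemma Z_succ (n : ℕ) (ω : Ω) :
    Z η (n + 1) ω = Z η n ω + ((n : ℝ) + 1) * η (n + 1) ω := by
  rw [Z, Z, Finset.sum_Icc_succ_top (Nat.one_le_iff_ne_zero.2 (Nat.succ_ne_zero n))]
  push_cast
  ring

lemma ae_nonneg (hmeas : ∀ j, Measurable (η j))
    (hexp : ∀ j, Measure.map (η j) μ = expMeasure 1) :
    ∀ᵐ ω ∂μ, ∀ j, 0 ≤ η j ω := by
  rw [ae_all_iff]
  intro j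
  have h := Measure.map_apply (μ := μ) (hmeas j) (measurableSet_Iio (a := (0:ℝ)))
  rw [hexp j, expMeasure_Iio_zero] at h
  have hz : μ {ω | η j ω < 0} = 0 := h.symm
  filter_upwards [measure_eq_zero_iff_ae_notMem.1 hz] with ω hω
  simpa [not_lt] using hω

lemma Z_nonneg {ω : Ω} (h : ∀ j, 0 ≤ η j ω) (n : ℕ) : 0 ≤ Z η n ω :=
  Finset.sum_nonneg fun j _ => mul_nonneg (Nat.cast_nonneg j) (h j)

lemma Z_mono {ω : Ω} (h : ∀ j, 0 ≤ η j ω) : Monotone fun n => Z η n ω := by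
  intro m n hmn
  exact Finset.sum_le_sum_of_subset_of_nonneg (Finset.Icc_subset_Icc_right hmn)
    fun j _ _ => mul_nonneg (Nat.cast_nonneg j) (h j)

lemma indep_Z (hmeas : ∀ j, Measurable (η j))
    (hindep : iIndepFun η μ) (n : ℕ) :
    IndepFun (Z η n) (η (n + 1)) μ := by
  have hg : iIndepFun (fun (j : ℕ) (ω : Ω) => (j : ℝ) * η j ω) μ :=
    hindep.comp (fun (j : ℕ) (x : ℝ) => (j : ℝ) * x) fun j => measurable_id.const_mul _
  have h := hg.indepFun_finset_sum_of_notMem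
    (fun j => (hmeas j).const_mul _) (s := Finset.Icc 1 n) (i := n + 1) (by simp)
  have h2 := h.comp (φ := id) (ψ := fun x : ℝ => (((n + 1 : ℕ) : ℝ))⁻¹ * x)
    measurable_id (measurable_id.const_mul _)
  have e1 : id ∘ (∑ j ∈ Finset.Icc 1 n, fun (ω : Ω) => (j : ℝ) * η j ω) = Z η n := by
    funext ω; simp [Z, Finset.sum_apply]
  have e2 : (fun x : ℝ => (((n + 1 : ℕ) : ℝ))⁻¹ * x)
      ∘ (fun (ω : Ω) => ((n + 1 : ℕ) : ℝ) * η (n + 1) ω) = η (n + 1) := by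
    funext ω
    have hne : ((n + 1 : ℕ) : ℝ) ≠ 0 := by positivity
    have hne' : ((n : ℝ) + 1) ≠ 0 := by positivity
    simp only [Function.comp_apply]
    field_simp
  rw [e1, e2] at h2
  exact h2

lemma map_pair (hmeas : ∀ j, Measurable (η j))
    (hindep : iIndepFun η μ)
    (hexp : ∀ j, Measure.map (η j) μ = expMeasure 1) (n : ℕ) :
    μ.map (fun ω => (Z η n ω, η (n + 1) ω))
      = (μ.map (Z η n)).prod (expMeasure 1) := by
  rw [← hexp (n + 1)]
  exact (indepFun_iff_map_prod_eq_prod_map_map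
    (measurable_Z hmeas n).aemeasurable (hmeas (n + 1)).aemeasurable).1
    (indep_Z hmeas hindep n)

lemma vol_Ioc_inter_Ici {t b : ℝ} (hb : 0 ≤ b) :
    volume (Ioc 0 t ∩ Ici b) = ENNReal.ofReal (t - b) := by
  rcases eq_or_lt_of_le hb with h | h
  · rw [← h]
    have he : Ioc 0 t ∩ Ici (0:ℝ) = Ioc 0 t :=
      Set.inter_eq_left.2 fun s hs => le_of_lt hs.1
    rw [he, Real.volume_Ioc, sub_zero]
  · have he : Ioc 0 t ∩ Ici b = Icc b t := by
      ext s
      constructor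
      · rintro ⟨⟨_, h2⟩, h3⟩; exact ⟨h3, h2⟩
      · rintro ⟨h1, h2⟩; exact ⟨⟨lt_of_lt_of_le h h1, h2⟩, h1⟩
    rw [he, Real.volume_Icc]

lemma ofReal_split (a : ℝ) {b : ℝ} (hb : 0 ≤ b) :
    ENNReal.ofReal a = ENNReal.ofReal (a - b) + ENNReal.ofReal (min a b) := by
  rcases le_or_gt a 0 with ha | ha
  · rw [ENNReal.ofReal_eq_zero.2 ha, ENNReal.ofReal_eq_zero.2 (by linarith),
      ENNReal.ofReal_eq_zero.2 (le_trans (min_le_left _ _) ha), add_zero]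
  · rcases le_or_gt b a with h | h
    · rw [min_eq_right h, ← ENNReal.ofReal_add (by linarith) hb, sub_add_cancel]
    · rw [min_eq_left h.le, ENNReal.ofReal_eq_zero.2 (show a - b ≤ 0 by linarith), zero_add]

lemma step7c (hmeas : ∀ j, Measurable (η j))
    (hindep : iIndepFun η μ)
    (hexp : ∀ j, Measure.map (η j) μ = expMeasure 1) (n : ℕ) (t : ℝ) :
    ∫⁻ ω, ENNReal.ofReal (min (t - Z η n ω) (((n : ℝ) + 1) * η (n + 1) ω)) ∂μ
      = ENNReal.ofReal ((n : ℝ) + 1) * μ {ω | Z η (n + 1) ω ≤ t} := by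
  set c : ℝ := (n : ℝ) + 1 with hcdef
  have hc : 0 < c := by positivity
  have hpairmeas : Measurable fun ω => (Z η n ω, η (n + 1) ω) :=
    (measurable_Z hmeas n).prodMk (hmeas _)
  have hG : Measurable fun p : ℝ × ℝ => ENNReal.ofReal (min (t - p.1) (c * p.2)) :=
    ((measurable_const.sub measurable_fst).min (measurable_snd.const_mul c)).ennreal_ofReal
  have hSmeas : MeasurableSet {p : ℝ × ℝ | p.1 + c * p.2 ≤ t} :=
    measurableSet_le (measurable_fst.add (measurable_snd.const_mul c)) measurable_const
  have hL : ∫⁻ ω, ENNReal.ofReal (min (t - Z η n ω) (c * η (n + 1) ω)) ∂μ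
      = ∫⁻ x, ∫⁻ y, ENNReal.ofReal (min (t - x) (c * y)) ∂(expMeasure 1)
          ∂(μ.map (Z η n)) := by
    rw [← lintegral_map hG hpairmeas, map_pair hmeas hindep hexp n,
      lintegral_prod _ hG.aemeasurable]
  have hR : μ {ω | Z η (n + 1) ω ≤ t}
      = ∫⁻ x, expMeasure 1 {y | c * y ≤ t - x} ∂(μ.map (Z η n)) := by
    have h1 : {ω | Z η (n + 1) ω ≤ t}
        = (fun ω => (Z η n ω, η (n + 1) ω)) ⁻¹' {p : ℝ × ℝ | p.1 + c * p.2 ≤ t} := by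
      ext ω; simp only [Set.mem_setOf_eq, Set.mem_preimage, Z_succ, hcdef]
    rw [h1, ← Measure.map_apply hpairmeas hSmeas, map_pair hmeas hindep hexp n,
      Measure.prod_apply hSmeas]
    refine lintegral_congr fun x => ?_
    congr 1
    ext y
    simp only [Set.mem_preimage, Set.mem_setOf_eq]
    constructor <;> intro h <;> linarith
  rw [hL, hR, ← lintegral_const_mul' _ _ ENNReal.ofReal_ne_top]
  exact lintegral_congr fun x => lintegral_min_exp hc (t - x)

lemma step7a {f : Ω → ℝ} (hf : Measurable f) (t : ℝ) :
    ∫⁻ s in Ioc 0 t, μ {ω | f ω ≤ s} ∂volume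
      = ∫⁻ ω, volume (Ioc 0 t ∩ Ici (f ω)) ∂μ := by
  have hmS : MeasurableSet {p : ℝ × Ω | f p.2 ≤ p.1} :=
    measurableSet_le (hf.comp measurable_snd) measurable_fst
  have hswap := lintegral_lintegral_swap (μ := volume.restrict (Ioc 0 t)) (ν := μ)
    (f := fun s ω => ({p : ℝ × Ω | f p.2 ≤ p.1}).indicator (fun _ => (1 : ℝ≥0∞)) (s, ω))
    ((measurable_one.indicator hmS).aemeasurable)
  have h1 : ∀ s : ℝ,
      (∫⁻ ω, ({p : ℝ × Ω | f p.2 ≤ p.1}).indicator (fun _ => (1 : ℝ≥0∞)) (s, ω) ∂μ)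
      = μ {ω | f ω ≤ s} := by
    intro s
    have he : ∀ ω, ({p : ℝ × Ω | f p.2 ≤ p.1}).indicator (fun _ => (1 : ℝ≥0∞)) (s, ω)
        = ({ω | f ω ≤ s}).indicator (fun _ => 1) ω := fun ω => by
      simp [Set.indicator_apply, Set.mem_setOf_eq]
    simp_rw [he]
    exact lintegral_indicator_one (hf measurableSet_Iic)
  have h2 : ∀ ω : Ω,
      (∫⁻ s in Ioc 0 t, ({p : ℝ × Ω | f p.2 ≤ p.1}).indicator (fun _ => (1 : ℝ≥0∞)) (s, ω) ∂volume)
      = volume (Ioc 0 t ∩ Ici (f ω)) := by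
    intro ω
    have he : ∀ s : ℝ, ({p : ℝ × Ω | f p.2 ≤ p.1}).indicator (fun _ => (1 : ℝ≥0∞)) (s, ω)
        = (Ici (f ω)).indicator (fun _ => 1) s := fun s => by
      simp [Set.indicator_apply, Set.mem_setOf_eq, Set.mem_Ici]
    simp_rw [he]
    rw [lintegral_indicator measurableSet_Ici, setLIntegral_one,
      Measure.restrict_apply measurableSet_Ici, Set.inter_comm]
  calc ∫⁻ s in Ioc 0 t, μ {ω | f ω ≤ s} ∂volume
      = ∫⁻ s in Ioc 0 t, ∫⁻ ω, ({p : ℝ × Ω | f p.2 ≤ p.1}).indicator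
          (fun _ => (1 : ℝ≥0∞)) (s, ω) ∂μ ∂volume := by
        exact (lintegral_congr fun s => (h1 s).symm)
    _ = ∫⁻ ω, ∫⁻ s in Ioc 0 t, ({p : ℝ × Ω | f p.2 ≤ p.1}).indicator
          (fun _ => (1 : ℝ≥0∞)) (s, ω) ∂volume ∂μ := hswap
    _ = ∫⁻ ω, volume (Ioc 0 t ∩ Ici (f ω)) ∂μ := lintegral_congr fun ω => h2 ω

lemma step7 (hmeas : ∀ j, Measurable (η j))
    (hindep : iIndepFun η μ)
    (hexp : ∀ j, Measure.map (η j) μ = expMeasure 1) (n : ℕ) (t : ℝ) :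
    ∫⁻ s in Ioc 0 t, μ {ω | Z η n ω ≤ s} ∂volume
      = ∫⁻ s in Ioc 0 t, μ {ω | Z η (n + 1) ω ≤ s} ∂volume
        + ENNReal.ofReal ((n : ℝ) + 1) * μ {ω | Z η (n + 1) ω ≤ t} := by
  have hmin : Measurable fun ω =>
      ENNReal.ofReal (min (t - Z η n ω) (((n : ℝ) + 1) * η (n + 1) ω)) :=
    ((measurable_const.sub (measurable_Z hmeas n)).min
      ((hmeas (n + 1)).const_mul _)).ennreal_ofReal
  rw [step7a (measurable_Z hmeas n) t, step7a (measurable_Z hmeas (n + 1)) t,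
    ← step7c hmeas hindep hexp n t, ← lintegral_add_right' _ hmin.aemeasurable]
  apply lintegral_congr_ae
  filter_upwards [ae_nonneg hmeas hexp] with ω hω
  rw [vol_Ioc_inter_Ici (Z_nonneg hω n), vol_Ioc_inter_Ici (Z_nonneg hω (n + 1)), Z_succ]
  have he : t - (Z η n ω + ((n : ℝ) + 1) * η (n + 1) ω)
      = t - Z η n ω - ((n : ℝ) + 1) * η (n + 1) ω := by ring
  rw [he]
  exact ofReal_split _ (mul_nonneg (by positivity) (hω (n + 1)))

lemma A_zero {t : ℝ} (ht : 0 ≤ t) :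
    ∫⁻ s in Ioc 0 t, μ {ω | Z η 0 ω ≤ s} ∂volume = ENNReal.ofReal t := by
  have h : ∀ s ∈ Ioc (0:ℝ) t, μ {ω | Z η 0 ω ≤ s} = 1 := by
    intro s hs
    have he : {ω : Ω | Z η 0 ω ≤ s} = Set.univ := by
      ext ω; simp [Z_zero, hs.1.le]
    rw [he, measure_univ]
  rw [setLIntegral_congr_fun measurableSet_Ioc h, setLIntegral_one,
    Real.volume_Ioc, sub_zero]

lemma telescope (hmeas : ∀ j, Measurable (η j))
    (hindep : iIndepFun η μ)
    (hexp : ∀ j, Measure.map (η j) μ = expMeasure 1) {t : ℝ} (ht : 0 ≤ t) (N : ℕ) :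
    (∑ n ∈ Finset.range N, ENNReal.ofReal ((n : ℝ) + 1) * μ {ω | Z η (n + 1) ω ≤ t})
      + ∫⁻ s in Ioc 0 t, μ {ω | Z η N ω ≤ s} ∂volume = ENNReal.ofReal t := by
  induction N with
  | zero => rw [Finset.sum_range_zero, zero_add, A_zero ht]
  | succ N ih =>
    rw [Finset.sum_range_succ, ← ih, step7 hmeas hindep hexp N t]
    ring

lemma F_le (hmeas : ∀ j, Measurable (η j))
    (hindep : iIndepFun η μ)
    (hexp : ∀ j, Measure.map (η j) μ = expMeasure 1) {t : ℝ} (ht : 0 ≤ t) (N : ℕ) :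
    μ {ω | Z η N ω ≤ t} ≤ ENNReal.ofReal (t ^ N / N.factorial) := by
  have hsub : μ {ω | Z η N ω ≤ t}
      ≤ μ (⋂ j ∈ Finset.Icc 1 N, {ω | (j : ℝ) * η j ω ≤ t}) := by
    apply measure_mono_ae
    filter_upwards [ae_nonneg hmeas hexp] with ω hω hZ
    refine Set.mem_iInter₂.2 fun j hj => ?_
    show (j : ℝ) * η j ω ≤ t
    calc (j : ℝ) * η j ω
        ≤ Z η N ω := Finset.single_le_sum
          (f := fun (j : ℕ) => (j : ℝ) * η j ω)
          (fun i _ => mul_nonneg (Nat.cast_nonneg i) (hω i)) hj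
      _ ≤ t := hZ
  have hprod : μ (⋂ j ∈ Finset.Icc 1 N, {ω | (j : ℝ) * η j ω ≤ t})
      = ∏ j ∈ Finset.Icc 1 N, μ {ω | (j : ℝ) * η j ω ≤ t} := by
    apply hindep.meas_biInter
    intro j hj
    refine ⟨{x : ℝ | (j : ℝ) * x ≤ t}, measurableSet_le (measurable_id.const_mul _)
      measurable_const, ?_⟩
    rfl
  have hfac : ∀ j ∈ Finset.Icc 1 N, μ {ω | (j : ℝ) * η j ω ≤ t}
      ≤ ENNReal.ofReal (t / j) := by
    intro j hj
    have hjpos : (0 : ℝ) < j := by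
      have := (Finset.mem_Icc.1 hj).1
      exact_mod_cast Nat.lt_of_lt_of_le Nat.zero_lt_one this
    have hset : {ω | (j : ℝ) * η j ω ≤ t} = η j ⁻¹' (Iic (t / j)) := by
      ext ω
      simp [Set.mem_preimage, Set.mem_Iic, le_div_iff₀ hjpos, mul_comm]
    rw [hset, ← Measure.map_apply (hmeas j) measurableSet_Iic, hexp j, expMeasure_Iic]
    split_ifs with h
    · refine ENNReal.ofReal_le_ofReal ?_
      have := add_one_le_exp (-(t / j))
      linarith
    · simp
  calc μ {ω | Z η N ω ≤ t}
      ≤ ∏ j ∈ Finset.Icc 1 N, μ {ω | (j : ℝ) * η j ω ≤ t} := hsub.trans_eq hprod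
    _ ≤ ∏ j ∈ Finset.Icc 1 N, ENNReal.ofReal (t / j) := Finset.prod_le_prod' hfac
    _ = ENNReal.ofReal (∏ j ∈ Finset.Icc 1 N, (t / (j : ℝ))) :=
        (ENNReal.ofReal_prod_of_nonneg fun j hj => by positivity).symm
    _ = ENNReal.ofReal (t ^ N / N.factorial) := by
        congr 1
        rw [Finset.prod_div_distrib, Finset.prod_const]
        congr 1
        · rw [Nat.card_Icc]; simp
        · rw [← Nat.cast_prod]
          congr 1
          rw [← Finset.prod_range_add_one_eq_factorial N, ← Finset.Ico_add_one_right_eq_Icc,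
            Finset.prod_Ico_eq_prod_range]
          simp [add_comm]

lemma tsum_key (hmeas : ∀ j, Measurable (η j))
    (hindep : iIndepFun η μ)
    (hexp : ∀ j, Measure.map (η j) μ = expMeasure 1) {t : ℝ} (ht : 0 ≤ t) :
    ∑' n : ℕ, ENNReal.ofReal ((n : ℝ) + 1) * μ {ω | Z η (n + 1) ω ≤ t}
      = ENNReal.ofReal t := by
  set f : ℕ → ℝ≥0∞ := fun n => ENNReal.ofReal ((n : ℝ) + 1) * μ {ω | Z η (n + 1) ω ≤ t}
  set A : ℕ → ℝ≥0∞ := fun N => ∫⁻ s in Ioc 0 t, μ {ω | Z η N ω ≤ s} ∂volume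
  have hA0 : Tendsto A atTop (𝓝 0) := by
    have hub : ∀ N, A N ≤ ENNReal.ofReal t * ENNReal.ofReal (t ^ N / N.factorial) := by
      intro N
      calc A N ≤ ∫⁻ _ in Ioc 0 t, μ {ω | Z η N ω ≤ t} ∂volume := by
            apply setLIntegral_mono' measurableSet_Ioc
            intro s hs
            exact measure_mono fun ω hω => le_trans hω hs.2
        _ = ENNReal.ofReal t * μ {ω | Z η N ω ≤ t} := by
            rw [setLIntegral_const, Real.volume_Ioc, sub_zero, mul_comm]
        _ ≤ ENNReal.ofReal t * ENNReal.ofReal (t ^ N / N.factorial) :=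
            mul_le_mul_right (F_le hmeas hindep hexp ht N) _
    have hlim : Tendsto (fun N : ℕ => ENNReal.ofReal t * ENNReal.ofReal (t ^ N / N.factorial))
        atTop (𝓝 0) := by
      have h1 : Tendsto (fun N : ℕ => (t : ℝ) ^ N / N.factorial) atTop (𝓝 0) :=
        FloorSemiring.tendsto_pow_div_factorial_atTop t
      have h2 : Tendsto (fun N : ℕ => ENNReal.ofReal (t ^ N / N.factorial)) atTop (𝓝 0) := by
        have := (ENNReal.continuous_ofReal.tendsto 0).comp h1
        simpa [Function.comp_def] using this
      simpa using ENNReal.Tendsto.const_mul h2 (Or.inr ENNReal.ofReal_ne_top)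
    exact tendsto_of_tendsto_of_tendsto_of_le_of_le tendsto_const_nhds hlim
      (fun N => zero_le) hub
  have hpartial : Tendsto (fun N => ∑ n ∈ Finset.range N, f n) atTop (𝓝 (∑' n, f n)) :=
    ENNReal.tendsto_nat_tsum f
  have hsum : Tendsto (fun N => (∑ n ∈ Finset.range N, f n) + A N) atTop
      (𝓝 ((∑' n, f n) + 0)) := hpartial.add hA0
  have hconst : ∀ N, (∑ n ∈ Finset.range N, f n) + A N = ENNReal.ofReal t :=
    fun N => telescope hmeas hindep hexp ht N
  have : Tendsto (fun _ : ℕ => ENNReal.ofReal t) atTop (𝓝 ((∑' n, f n) + 0)) := by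
    simpa only [hconst] using hsum
  have := tendsto_nhds_unique this tendsto_const_nhds
  rw [add_zero] at this
  exact this

lemma ae_char (hmeas : ∀ j, Measurable (η j))
    (hindep : iIndepFun η μ)
    (hexp : ∀ j, Measure.map (η j) μ = expMeasure 1) {t : ℝ} (ht : 0 ≤ t) :
    ∀ᵐ ω ∂μ, ∀ n : ℕ, (Z η n ω ≤ t ↔ n ≤ entranceCount η t ω) := by
  have hfin : (∑' n : ℕ, μ {ω | Z η n ω ≤ t}) ≠ ∞ := by
    refine ne_top_of_le_ne_top ?_
      (ENNReal.tsum_le_tsum fun n => F_le hmeas hindep hexp ht n)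
    rw [← ENNReal.ofReal_tsum_of_nonneg (fun n => by positivity)
      (Real.summable_pow_div_factorial t)]
    exact ENNReal.ofReal_ne_top
  have hBC := ae_eventually_notMem (s := fun n => {ω | Z η n ω ≤ t}) hfin
  filter_upwards [ae_nonneg hmeas hexp, hBC] with ω hω hev
  set S : Set ℕ := {n | Z η n ω ≤ t} with hS
  have h0 : 0 ∈ S := by
    have : Z η 0 ω = 0 := Z_zero ω
    simp only [hS, Set.mem_setOf_eq, this]
    exact ht
  have hbdd : BddAbove S := by
    obtain ⟨N, hN⟩ := eventually_atTop.1 hev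
    refine ⟨N, fun n hn => ?_⟩
    by_contra hcon
    exact hN n (le_of_not_ge hcon) hn
  have hMdef : entranceCount η t ω = sSup S := rfl
  intro n
  constructor
  · intro h
    rw [hMdef]
    exact le_csSup hbdd h
  · intro h
    have hmem : sSup S ∈ S := Nat.sSup_mem ⟨0, h0⟩ hbdd
    rw [hMdef] at h
    exact le_trans (Z_mono hω h) hmem

lemma nat_gauss (m : ℕ) : 2 * ∑ n ∈ Finset.range m, (n + 1) = m * m + m := by
  have hN1 : ∑ i ∈ Finset.range (m + 1), i = ∑ n ∈ Finset.range m, (n + 1) := by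
    simpa using Finset.sum_range_succ' (fun i => i) m
  have hN2 := Finset.sum_range_id_mul_two (m + 1)
  rw [hN1] at hN2
  simp only [Nat.add_sub_cancel] at hN2
  have hmm : (m + 1) * m = m * m + m := by ring
  omega

end main

end EntranceAux

open EntranceAux

/-- For the pure-birth process `M(t)` with jump rate `1/(n+1)` from state `n` and
`M(0) = 0` (realized as `M(t) = max{n : ζₙ ≤ t}` with `ζₙ = ∑_{j=1}^n j·η_j`,
`η_j` i.i.d. standard exponentials), `E[M(t)²] = 2t − E[M(t)]` for all `t ≥ 0`. -/
theorem second_moment_of_entrance_count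
    {Ω : Type*} [MeasurableSpace Ω] (μ : Measure Ω) [IsProbabilityMeasure μ]
    (η : ℕ → Ω → ℝ) (hmeas : ∀ j, Measurable (η j))
    (hindep : iIndepFun η μ)
    (hexp : ∀ j, Measure.map (η j) μ = expMeasure 1)
    (t : ℝ) (ht : 0 ≤ t) :
    (∫ ω, ((entranceCount η t ω : ℝ)) ^ 2 ∂μ)
      = 2 * t - ∫ ω, (entranceCount η t ω : ℝ) ∂μ := by
  classical
  set M : Ω → ℕ := entranceCount η t with hMdef
  have hchar := ae_char (μ := μ) hmeas hindep hexp ht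
  -- measurable indicator sets
  have hZset : ∀ n : ℕ, MeasurableSet {ω : Ω | Z η n ω ≤ t} :=
    fun n => measurableSet_le (measurable_Z hmeas n) measurable_const
  -- the counting function
  set g : Ω → ℝ≥0∞ := fun ω =>
    ∑' n : ℕ, ({ω' : Ω | Z η (n + 1) ω' ≤ t}).indicator (fun _ => (1 : ℝ≥0∞)) ω with hgdef
  have hgmeas : Measurable g :=
    Measurable.ennreal_tsum fun n => measurable_one.indicator (hZset (n + 1))
  have hgM : ∀ᵐ ω ∂μ, g ω = (M ω : ℝ≥0∞) := by
    filter_upwards [hchar] with ω hω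
    have hterm : ∀ n : ℕ,
        ({ω' : Ω | Z η (n + 1) ω' ≤ t}).indicator (fun _ => (1 : ℝ≥0∞)) ω
          = if n < M ω then 1 else 0 := by
      intro n
      rw [Set.indicator_apply]
      congr 1
      simp only [Set.mem_setOf_eq, eq_iff_iff, hω (n + 1), Nat.succ_le_iff, hMdef]
    rw [hgdef]
    simp only [hterm]
    rw [tsum_eq_sum (s := Finset.range (M ω))
      (fun n hn => by rw [if_neg (by simpa using hn)])]
    rw [Finset.sum_congr rfl (fun n hn => by rw [if_pos (Finset.mem_range.1 hn)])]
    simp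
  have haeM : AEMeasurable (fun ω => (M ω : ℝ≥0∞)) μ := hgmeas.aemeasurable.congr hgM
  -- key lintegral identity
  set w : ℕ → ℝ≥0∞ := fun n => ENNReal.ofReal ((n : ℝ) + 1) with hwdef
  have hkey : (∫⁻ ω, ((M ω : ℝ≥0∞) ^ 2 + (M ω : ℝ≥0∞)) ∂μ) = 2 * ENNReal.ofReal t := by
    have h1 : (∫⁻ ω, ∑' n : ℕ,
        w n * ({ω' : Ω | Z η (n + 1) ω' ≤ t}).indicator (fun _ => (1 : ℝ≥0∞)) ω ∂μ)
        = ∑' n : ℕ, w n * μ {ω | Z η (n + 1) ω ≤ t} := by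
      rw [lintegral_tsum (f := fun (n : ℕ) (ω : Ω) =>
          w n * ({ω' : Ω | Z η (n + 1) ω' ≤ t}).indicator (fun _ => (1 : ℝ≥0∞)) ω)
        fun n => ((measurable_one.indicator (hZset (n + 1))).const_mul (w n)).aemeasurable]
      congr 1
      funext n
      rw [lintegral_const_mul' _ _ ENNReal.ofReal_ne_top, lintegral_indicator (hZset (n + 1))]
      simp [hwdef]
    have h2 : ∀ᵐ ω ∂μ, ((M ω : ℝ≥0∞) ^ 2 + (M ω : ℝ≥0∞))
        = 2 * ∑' n : ℕ, w n * ({ω' : Ω | Z η (n + 1) ω' ≤ t}).indicator (fun _ => (1 : ℝ≥0∞)) ω := by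
      filter_upwards [hchar] with ω hω
      have hterm : ∀ n : ℕ,
          w n * ({ω' : Ω | Z η (n + 1) ω' ≤ t}).indicator (fun _ => (1 : ℝ≥0∞)) ω
            = if n < M ω then ((n + 1 : ℕ) : ℝ≥0∞) else 0 := by
        intro n
        rw [Set.indicator_apply]
        split_ifs with h h' h'
        · rw [mul_one, hwdef]
          push_cast
          rw [ENNReal.ofReal_add (by positivity) zero_le_one]
          simp [ENNReal.ofReal_natCast]
        · exact absurd ((hω (n + 1)).1 h) (by simpa [Nat.succ_le_iff] using h')
        · exact absurd ((hω (n + 1)).2 (Nat.succ_le_of_lt h')) h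
        · exact mul_zero _
      rw [tsum_congr hterm, tsum_eq_sum (s := Finset.range (M ω))
        (fun n hn => by rw [if_neg (by simpa using hn)]),
        Finset.sum_congr rfl (fun n hn => by rw [if_pos (Finset.mem_range.1 hn)])]
      have := nat_gauss (M ω)
      have hcast : (2 : ℝ≥0∞) * ∑ n ∈ Finset.range (M ω), ((n + 1 : ℕ) : ℝ≥0∞)
          = ((2 * ∑ n ∈ Finset.range (M ω), (n + 1) : ℕ) : ℝ≥0∞) := by
        push_cast
        ring
      rw [hcast, this]
      push_cast
      ring
    rw [lintegral_congr_ae h2, lintegral_const_mul' _ _ (by norm_num), h1,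
      tsum_key hmeas hindep hexp ht]
  -- split
  have haeM2 : AEMeasurable (fun ω => (M ω : ℝ≥0∞) ^ 2) μ := haeM.pow_const 2
  have hsplit : (∫⁻ ω, (M ω : ℝ≥0∞) ^ 2 ∂μ) + (∫⁻ ω, (M ω : ℝ≥0∞) ∂μ)
      = 2 * ENNReal.ofReal t := by
    rw [← lintegral_add_left' haeM2]
    exact hkey
  have h2t : (2 : ℝ≥0∞) * ENNReal.ofReal t ≠ ∞ := by
    exact ENNReal.mul_ne_top (by norm_num) ENNReal.ofReal_ne_top
  have hL2ne : (∫⁻ ω, (M ω : ℝ≥0∞) ^ 2 ∂μ) ≠ ∞ :=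
    ne_top_of_le_ne_top h2t (hsplit ▸ le_self_add)
  have hL1ne : (∫⁻ ω, (M ω : ℝ≥0∞) ∂μ) ≠ ∞ :=
    ne_top_of_le_ne_top h2t (hsplit ▸ le_add_self)
  -- Bochner conversions
  have haesm : AEStronglyMeasurable (fun ω => (M ω : ℝ)) μ := by
    refine ((hgmeas.ennreal_toReal).aestronglyMeasurable).congr ?_
    filter_upwards [hgM] with ω hω
    rw [hω]
    simp
  have hof1 : ∀ ω, ENNReal.ofReal ((M ω : ℝ)) = (M ω : ℝ≥0∞) := fun ω =>
    ENNReal.ofReal_natCast _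
  have hof2 : ∀ ω, ENNReal.ofReal ((M ω : ℝ) ^ 2) = (M ω : ℝ≥0∞) ^ 2 := fun ω => by
    rw [ENNReal.ofReal_pow (by positivity), hof1]
  have hint2 : (∫ ω, ((M ω : ℝ)) ^ 2 ∂μ) = (∫⁻ ω, (M ω : ℝ≥0∞) ^ 2 ∂μ).toReal := by
    rw [integral_eq_lintegral_of_nonneg_ae (ae_of_all _ fun ω => sq_nonneg ((M ω : ℝ)))
      ((haesm.aemeasurable.pow_const 2).aestronglyMeasurable)]
    congr 1
    exact lintegral_congr fun ω => hof2 ω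
  have hint1 : (∫ ω, ((M ω : ℝ)) ∂μ) = (∫⁻ ω, (M ω : ℝ≥0∞) ∂μ).toReal := by
    rw [integral_eq_lintegral_of_nonneg_ae (ae_of_all _ fun ω => by positivity) haesm]
    congr 1
    exact lintegral_congr fun ω => hof1 ω
  have hreal : (∫⁻ ω, (M ω : ℝ≥0∞) ^ 2 ∂μ).toReal + (∫⁻ ω, (M ω : ℝ≥0∞) ∂μ).toReal
      = 2 * t := by
    rw [← ENNReal.toReal_add hL2ne hL1ne, hsplit, ENNReal.toReal_mul,
      ENNReal.toReal_ofReal ht]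
    norm_num
  rw [hint2, hint1]
  linarith
end
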